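/- Let Λ > 0 and let (μ, P, H) be an admissible triple in ℝ³ with μ ≠ 0 whose support is compact and connected, and let d = diam(supp μ) > 0. Writing W(μ) = ∫ |H|² dμ and W_Λ(μ) = W(μ) − Λ μ(ℝ³), the following three inequalities hold: (1) W_Λ(μ) ≥ μ(ℝ³) (1/d² − Λ); (2) W_Λ(μ) ≥ W(μ) (1 − Λ d²); (4) W(μ)/μ(ℝ³) ≥ 1/d². -/

import Mathlib

open MeasureTheory Metric Filter
open scoped RealInnerProductSpace ENNReal

noncomputable section

/-- Euclidean three-space. -/
abbrev E3 : Type := EuclideanSpace ℝ (Fin 3)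

/-- The support of a measure: points all of whose neighbourhoods have positive measure. -/
def mSupport (μ : Measure E3) : Set E3 := {x | ∀ r > 0, 0 < μ (ball x r)}

/-- An admissible triple `(μ, P, H)`: a finite compactly supported Borel measure, a measurable
family of maps which μ-a.e. are orthogonal projections onto 2-dimensional planes (idempotent,
symmetric, of rank two), and an `L²(μ)` generalized mean curvature `H` satisfying the first
variation identity `∫ trace(P x ∘ DX x) dμ = -2 ∫ ⟨X x, H x⟩ dμ` for every compactly supported
`C¹` vector field `X`. -/
structure IsAdmissible (μ : Measure E3) (P : E3 → E3 →L[ℝ] E3) (H : E3 → E3) : Prop where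
  finite : IsFiniteMeasure μ
  compact_support : IsCompact (mSupport μ)
  meas_P : ∀ v : E3, Measurable fun x => P x v
  meas_H : AEStronglyMeasurable H μ
  proj_ae : ∀ᵐ x ∂μ, (P x).comp (P x) = P x ∧
      (∀ u v : E3, ⟪P x u, v⟫ = ⟪u, P x v⟫) ∧
      Module.finrank ℝ (LinearMap.range ((P x : E3 →ₗ[ℝ] E3))) = 2
  memL2 : MemLp H 2 μ
  first_variation : ∀ X : E3 → E3, ContDiff ℝ 1 X → HasCompactSupport X →
      ∫ x, LinearMap.trace ℝ E3 ((P x).comp (fderiv ℝ X x) : E3 →ₗ[ℝ] E3) ∂μ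
        = -2 * ∫ x, ⟪X x, H x⟫ ∂μ

/-- The generalized mean curvature is perpendicular: `(P x) (H x) = 0` for μ-a.e. `x`. -/
def IsPerp (μ : Measure E3) (P : E3 → E3 →L[ℝ] E3) (H : E3 → E3) : Prop :=
  ∀ᵐ x ∂μ, P x (H x) = 0

/-- The Willmore energy of an admissible triple. -/
def Willmore (μ : Measure E3) (H : E3 → E3) : ℝ := ∫ x, ‖H x‖ ^ 2 ∂μ

/-- The mass of a measure. -/
def Mass (μ : Measure E3) : ℝ := (μ Set.univ).toReal

lemma mSupport_compl_null (μ : Measure E3) : μ (mSupport μ)ᶜ = 0 := by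
  apply measure_null_of_locally_null
  intro x hx
  simp only [mSupport, Set.mem_compl_iff, Set.mem_setOf_eq, not_forall] at hx
  obtain ⟨r, hr, hr0⟩ := hx
  refine ⟨ball x r, mem_nhdsWithin_of_mem_nhds (ball_mem_nhds x hr), ?_⟩
  simpa using hr0

lemma ae_mem_mSupport (μ : Measure E3) : ∀ᵐ x ∂μ, x ∈ mSupport μ :=
  ae_iff.2 (by exact mSupport_compl_null μ)

lemma mass_le_sq_diam_mul_willmore (μ : Measure E3) (P : E3 → E3 →L[ℝ] E3) (H : E3 → E3)
    (hadm : IsAdmissible μ P H) (hμ : μ ≠ 0)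
    (d : ℝ) (hd : d = diam (mSupport μ)) (hdpos : 0 < d) :
    Mass μ ≤ d ^ 2 * Willmore μ H := by
  haveI := hadm.finite
  -- a point in the support
  have hne : (mSupport μ).Nonempty := by
    by_contra h
    rw [Set.not_nonempty_iff_eq_empty] at h
    apply hμ
    have : μ Set.univ = 0 := by
      have := mSupport_compl_null μ
      rwa [h, Set.compl_empty] at this
    exact Measure.measure_univ_eq_zero.mp this
  obtain ⟨x₀, hx₀⟩ := hne
  -- a radius containing the support
  obtain ⟨R, hR⟩ := hadm.compact_support.isBounded.subset_closedBall x₀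
  set R' : ℝ := max R 0 with hR'
  have hsub : mSupport μ ⊆ closedBall x₀ R' :=
    hR.trans (closedBall_subset_closedBall (le_max_left _ _))
  have hR'0 : (0:ℝ) ≤ R' := le_max_right _ _
  -- the bump function
  set f : ContDiffBump x₀ := ⟨R' + 1, R' + 2, by linarith, by linarith⟩ with hf
  set X : E3 → E3 := fun x => f x • (x - x₀) with hX
  have hC1 : ContDiff ℝ 1 X := (f.contDiff).smul (contDiff_id.sub contDiff_const)
  have hCS : HasCompactSupport X := f.hasCompactSupport.smul_right
  have hfv := hadm.first_variation X hC1 hCS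
  -- a.e., the trace integrand is 2 and the inner integrand is ⟪x - x₀, H x⟫
  have hae2 : ∀ᵐ x ∂μ,
      (LinearMap.trace ℝ E3 ((P x).comp (fderiv ℝ X x) : E3 →ₗ[ℝ] E3) = (2:ℝ)) ∧
      ⟪X x, H x⟫ = ⟪x - x₀, H x⟫ := by
    filter_upwards [ae_mem_mSupport μ, hadm.proj_ae] with x hxs hxp
    have hxball : x ∈ ball x₀ (R' + 1) := by
      have := hsub hxs
      rw [mem_closedBall] at this
      rw [mem_ball]; linarith
    have hone : ∀ y ∈ ball x₀ (R' + 1), X y = y - x₀ := by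
      intro y hy
      have : f y = 1 := f.one_of_mem_closedBall (ball_subset_closedBall hy)
      simp [hX, this]
    constructor
    · have heq : X =ᶠ[nhds x] (fun y => y - x₀) :=
        eventually_of_mem (isOpen_ball.mem_nhds hxball) hone
      have hfd : fderiv ℝ X x = ContinuousLinearMap.id ℝ E3 := by
        rw [heq.fderiv_eq, fderiv_sub_const, fderiv_id']
      rw [hfd, ContinuousLinearMap.comp_id]
      -- trace of the projection is its rank
      have hproj : LinearMap.IsProj (LinearMap.range ((P x : E3 →ₗ[ℝ] E3)))
          ((P x : E3 →ₗ[ℝ] E3)) := by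
        constructor
        · intro y; exact LinearMap.mem_range_self _ y
        · rintro y ⟨z, rfl⟩
          have := congrArg (fun T : E3 →L[ℝ] E3 => T z) hxp.1
          simpa using this
      rw [hproj.trace, hxp.2.2]
      norm_num
    · exact by rw [hone x hxball]
  have haeT := (ae_mem_mSupport μ).and hae2
  -- compute both sides
  have hL : ∫ x, LinearMap.trace ℝ E3 ((P x).comp (fderiv ℝ X x) : E3 →ₗ[ℝ] E3) ∂μ
      = Mass μ * 2 := by
    rw [integral_congr_ae (haeT.mono fun x hx => hx.2.1), integral_const]
    simp [Mass, smul_eq_mul]; rfl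
  have hR2 : ∫ x, ⟪X x, H x⟫ ∂μ = ∫ x, ⟪x - x₀, H x⟫ ∂μ :=
    integral_congr_ae (haeT.mono fun x hx => hx.2.2)
  rw [hL, hR2] at hfv
  -- integrability facts
  have HL1 : Integrable H μ :=
    memLp_one_iff_integrable.mp (hadm.memL2.mono_exponent (by norm_num))
  have hcont : Continuous fun x : E3 => x - x₀ := continuous_id.sub continuous_const
  have hmeasI : AEStronglyMeasurable (fun x => ⟪x - x₀, H x⟫) μ :=
    hcont.aestronglyMeasurable.inner hadm.meas_H
  have hbd : ∀ᵐ x ∂μ, ‖x - x₀‖ ≤ d := by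
    filter_upwards [ae_mem_mSupport μ] with x hx
    have : dist x x₀ ≤ diam (mSupport μ) :=
      dist_le_diam_of_mem hadm.compact_support.isBounded hx hx₀
    rw [hd]; rwa [dist_eq_norm] at this
  have hIntI : Integrable (fun x => ⟪x - x₀, H x⟫) μ := by
    refine Integrable.mono' (HL1.norm.const_mul d) hmeasI ?_
    filter_upwards [hbd] with x hx
    calc ‖⟪x - x₀, H x⟫‖ ≤ ‖x - x₀‖ * ‖H x‖ := by
          rw [Real.norm_eq_abs]; exact abs_real_inner_le_norm _ _
      _ ≤ d * ‖H x‖ := by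
          apply mul_le_mul_of_nonneg_right hx (norm_nonneg _)
  have hW2 : Integrable (fun x => ‖H x‖ ^ 2) μ :=
    (memLp_two_iff_integrable_sq_norm hadm.meas_H).1 hadm.memL2
  have hIntQ1 : Integrable (fun x => ‖x - x₀‖ ^ 2 / (2 * d ^ 2)) μ := by
    refine Integrable.mono' (integrable_const (d ^ 2 / (2 * d ^ 2)))
      (((hcont.norm.pow 2).div_const _).aestronglyMeasurable) ?_
    filter_upwards [hbd] with x hx
    rw [Real.norm_eq_abs, abs_of_nonneg (by positivity)]
    apply div_le_div_of_nonneg_right _ (by positivity)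
    exact pow_le_pow_left₀ (norm_nonneg _) hx 2
  -- Mass μ = ∫ ⟪x₀ - x, H x⟫
  have hMass : Mass μ = ∫ x, ⟪x₀ - x, H x⟫ ∂μ := by
    have : ∀ x, ⟪x₀ - x, H x⟫ = -⟪x - x₀, H x⟫ := by
      intro x
      rw [← inner_neg_left]; congr 1; abel
    simp_rw [this]
    rw [integral_neg]
    linarith [hfv]
  -- pointwise AM-GM bound
  have hptwise : ∀ᵐ x ∂μ, ⟪x₀ - x, H x⟫ ≤ ‖x - x₀‖ ^ 2 / (2 * d ^ 2) + d ^ 2 / 2 * ‖H x‖ ^ 2 := by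
    filter_upwards [hbd] with x hx
    have h1 : ⟪x₀ - x, H x⟫ ≤ ‖x₀ - x‖ * ‖H x‖ := real_inner_le_norm _ _
    have h2 : ‖x₀ - x‖ = ‖x - x₀‖ := norm_sub_rev _ _
    set a := ‖x - x₀‖; set b := ‖H x‖
    have h3 : 2 * d ^ 2 * (a * b) ≤ a ^ 2 + (d ^ 2) ^ 2 * b ^ 2 := by
      nlinarith [sq_nonneg (a - d ^ 2 * b)]
    have h2d : (0:ℝ) < 2 * d ^ 2 := by positivity
    have h4 : a * b ≤ a ^ 2 / (2 * d ^ 2) + d ^ 2 / 2 * b ^ 2 := by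
      calc a * b = (2 * d ^ 2 * (a * b)) / (2 * d ^ 2) := by field_simp
        _ ≤ (a ^ 2 + (d ^ 2) ^ 2 * b ^ 2) / (2 * d ^ 2) := by gcongr
        _ = a ^ 2 / (2 * d ^ 2) + d ^ 2 / 2 * b ^ 2 := by field_simp
    calc ⟪x₀ - x, H x⟫ ≤ a * b := by rw [← h2]; exact h1
      _ ≤ _ := h4
  -- integrate the bound
  have hInt2 : Integrable (fun x => ⟪x₀ - x, H x⟫) μ := by
    have : (fun x => ⟪x₀ - x, H x⟫) = fun x => -⟪x - x₀, H x⟫ := by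
      funext x; rw [← inner_neg_left]; congr 1; abel
    rw [this]; exact hIntI.neg
  have hmain : Mass μ ≤ Mass μ / 2 + d ^ 2 / 2 * Willmore μ H := by
    have hb : ∫ x, ⟪x₀ - x, H x⟫ ∂μ ≤ Mass μ / 2 + d ^ 2 / 2 * Willmore μ H := by
      calc ∫ x, ⟪x₀ - x, H x⟫ ∂μ
          ≤ ∫ x, (‖x - x₀‖ ^ 2 / (2 * d ^ 2) + d ^ 2 / 2 * ‖H x‖ ^ 2) ∂μ :=
            integral_mono_ae hInt2 (hIntQ1.add (hW2.const_mul _)) hptwise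
        _ = (∫ x, ‖x - x₀‖ ^ 2 / (2 * d ^ 2) ∂μ) + ∫ x, d ^ 2 / 2 * ‖H x‖ ^ 2 ∂μ :=
            integral_add hIntQ1 (hW2.const_mul _)
        _ ≤ Mass μ / 2 + d ^ 2 / 2 * Willmore μ H := by
            have hc : ∫ x, ‖x - x₀‖ ^ 2 / (2 * d ^ 2) ∂μ ≤ ∫ _x, (1:ℝ)/2 ∂μ := by
              apply integral_mono_ae hIntQ1 (integrable_const _)
              filter_upwards [hbd] with x hx
              have : ‖x - x₀‖ ^ 2 ≤ d ^ 2 := pow_le_pow_left₀ (norm_nonneg _) hx 2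
              calc ‖x - x₀‖ ^ 2 / (2 * d ^ 2) ≤ d ^ 2 / (2 * d ^ 2) := by
                    apply div_le_div_of_nonneg_right this (by positivity)
                _ = 1 / 2 := by field_simp
            have : ∫ _x, (1:ℝ)/2 ∂μ = Mass μ / 2 := by
              rw [integral_const]; simp [Mass, smul_eq_mul]; rfl
            rw [this] at hc
            have hW : ∫ x, d ^ 2 / 2 * ‖H x‖ ^ 2 ∂μ = d ^ 2 / 2 * Willmore μ H := by
              rw [integral_const_mul]; rfl
            linarith [hc, hW.le, hW.ge]
    linarith [hMass, hb]
  linarith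

/-- items (1), (2) and (4) of Corollary 1.9 of the paper, for a nonzero admissible
triple with compact connected support of diameter `d > 0`:
`W_Λ(μ) ≥ μ(ℝ³)(1/d² − Λ)`, `W_Λ(μ) ≥ W(μ)(1 − Λ d²)` and `W(μ)/μ(ℝ³) ≥ 1/d²`. -/
theorem connected_diameter_inequalities (Λ : ℝ) (hΛ : 0 < Λ)
    (μ : Measure E3) (P : E3 → E3 →L[ℝ] E3) (H : E3 → E3)
    (hadm : IsAdmissible μ P H) (hμ : μ ≠ 0) (hconn : IsConnected (mSupport μ))
    (d : ℝ) (hd : d = diam (mSupport μ)) (hdpos : 0 < d) :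
    Willmore μ H - Λ * Mass μ ≥ Mass μ * (1 / d ^ 2 - Λ) ∧
    Willmore μ H - Λ * Mass μ ≥ Willmore μ H * (1 - Λ * d ^ 2) ∧
    Willmore μ H / Mass μ ≥ 1 / d ^ 2 := by
  haveI := hadm.finite
  have key : Mass μ ≤ d ^ 2 * Willmore μ H :=
    mass_le_sq_diam_mul_willmore μ P H hadm hμ d hd hdpos
  have hM : 0 < Mass μ :=
    ENNReal.toReal_pos (Measure.measure_univ_ne_zero.mpr hμ) (measure_ne_top μ _)
  have hW : Mass μ / d ^ 2 ≤ Willmore μ H := by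
    rw [div_le_iff₀ (by positivity)]; linarith [key]
  refine ⟨?_, ?_, ?_⟩
  · have : Mass μ * (1 / d ^ 2 - Λ) = Mass μ / d ^ 2 - Λ * Mass μ := by ring
    rw [ge_iff_le, this]
    linarith [hW]
  · rw [ge_iff_le]
    nlinarith [key, hΛ, hM]
  · rw [ge_iff_le, div_le_div_iff₀ (by positivity : (0:ℝ) < d ^ 2) hM]
    linarith [key]


end
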